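/- Let O be a noetherian local domain and p a prime ideal such that O/p is a discrete valuation ring with uniformizer π. For each m let e_m ≥ 0 be the smallest integer such that π^{e_m} kills the torsion submodule of p^m/p^{m+1} as O/p-module. Then the sequence (e_m) is bounded. -/

import Mathlib

open Polynomial

/-- Let `O` be a noetherian local domain and `p` a prime ideal such that `O/p`
is a discrete valuation ring with uniformizer (the image of) `π`.  For each `m`
let `e_m` be the smallest integer such that `π^{e_m}` kills the torsion
submodule of `p^m/p^{m+1}`.  Then the sequence `(e_m)` is bounded: there is a
single power `π^B` killing the torsion submodule of `p^m/p^{m+1}` for all `m`. -/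
theorem torsion_exponents_bounded
    (O : Type*) [CommRing O] [IsDomain O] [IsNoetherianRing O] [IsLocalRing O]
    (p : Ideal O) [p.IsPrime] [IsDiscreteValuationRing (O ⧸ p)]
    (π : O) (hπ : Irreducible (Ideal.Quotient.mk p π)) :
    ∃ B : ℕ, ∀ m : ℕ, ∀ x ∈ p ^ m,
      (∃ N : ℕ, π ^ N * x ∈ p ^ (m + 1)) → π ^ B * x ∈ p ^ (m + 1) := by
  classical
  set R := reesAlgebra p with hR
  set P : Ideal R := Ideal.map (algebraMap O R) p with hP
  set π' : R := algebraMap O R π with hπ'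
  -- coefficients of elements of P lie in p^{k+1}
  have hPcoeff : ∀ f : R, f ∈ P → ∀ k, (f : O[X]).coeff k ∈ p ^ (k + 1) := by
    intro f hf
    rw [hP, Ideal.map, Ideal.span] at hf
    refine Submodule.span_induction ?_ ?_ ?_ ?_ hf
    · rintro g ⟨a, ha, rfl⟩ k
      have : ((algebraMap O R a : R) : O[X]) = C a := rfl
      rw [this, coeff_C]
      split_ifs with h
      · subst h; simpa using ha
      · exact Ideal.zero_mem _
    · intro k; simp
    · intro g h _ _ hg hh k
      have : ((g + h : R) : O[X]).coeff k = (g : O[X]).coeff k + (h : O[X]).coeff k := by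
        push_cast; rw [coeff_add]
      rw [this]; exact Ideal.add_mem _ (hg k) (hh k)
    · intro a g _ hg k
      rw [smul_eq_mul]
      show ((a : O[X]) * (g : O[X])).coeff k ∈ p ^ (k + 1)
      rw [coeff_mul]
      apply Ideal.sum_mem
      rintro ⟨i, j⟩ hij
      rw [Finset.HasAntidiagonal.mem_antidiagonal] at hij
      have h1 : (a : O[X]).coeff i ∈ p ^ i := a.2 i
      have h2 : (g : O[X]).coeff j ∈ p ^ (j + 1) := hg j
      have : p ^ (k + 1) = p ^ i * p ^ (j + 1) := by
        rw [← pow_add, ← hij]; ring_nf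
      rw [this]
      exact Ideal.mul_mem_mul h1 h2
  -- monomials with coefficient in p^{m+1} lie in P
  have hmono : ∀ (m : ℕ) (x : O) (hx : x ∈ p ^ (m + 1))
      (hx' : (monomial m x : O[X]) ∈ reesAlgebra p), (⟨monomial m x, hx'⟩ : R) ∈ P := by
    intro m x hx
    rw [pow_succ'] at hx
    refine Submodule.mul_induction_on'
      (C := fun y _ => ∀ hy' : (monomial m y : O[X]) ∈ reesAlgebra p,
        (⟨monomial m y, hy'⟩ : R) ∈ P) ?_ ?_ hx
    · intro a ha y hy hy'
      have hyR : (monomial m y : O[X]) ∈ reesAlgebra p := reesAlgebra.monomial_mem.mpr hy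
      have : (⟨monomial m (a * y), hy'⟩ : R)
          = algebraMap O R a * ⟨monomial m y, hyR⟩ := by
        refine Subtype.ext ?_
        show (monomial m (a * y) : O[X]) = C a * monomial m y
        rw [C_mul_monomial]
      rw [this]
      exact P.mul_mem_right _ (Ideal.mem_map_of_mem _ ha)
    · intro y hy z hz hCy hCz hyz'
      have hyR : (monomial m y : O[X]) ∈ reesAlgebra p :=
        reesAlgebra.monomial_mem.mpr (Ideal.mul_le_right hy)
      have hzR : (monomial m z : O[X]) ∈ reesAlgebra p :=
        reesAlgebra.monomial_mem.mpr (Ideal.mul_le_right hz)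
      have : (⟨monomial m (y + z), hyz'⟩ : R)
          = ⟨monomial m y, hyR⟩ + ⟨monomial m z, hzR⟩ := by
        refine Subtype.ext ?_
        show (monomial m (y + z) : O[X]) = monomial m y + monomial m z
        rw [(monomial m).map_add]
      rw [this]
      exact P.add_mem (hCy hyR) (hCz hzR)
  -- the torsion ideal J
  let J : Ideal R :=
    { carrier := { f | ∃ N : ℕ, π' ^ N * f ∈ P }
      add_mem' := by
        rintro a b ⟨Na, ha⟩ ⟨Nb, hb⟩
        refine ⟨Na + Nb, ?_⟩
        rw [mul_add]
        refine P.add_mem ?_ ?_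
        · rw [pow_add, mul_comm (π' ^ Na), mul_assoc]
          exact P.mul_mem_left _ ha
        · rw [pow_add, mul_assoc]
          exact P.mul_mem_left _ hb
      zero_mem' := ⟨0, by simpa using P.zero_mem⟩
      smul_mem' := by
        rintro c f ⟨N, hf⟩
        exact ⟨N, by rw [smul_eq_mul, mul_left_comm]; exact P.mul_mem_left _ hf⟩ }
  have hJfg : J.FG := IsNoetherian.noetherian J
  obtain ⟨s, hs⟩ := hJfg
  let Nfun : R → ℕ := fun g => if h : ∃ N : ℕ, π' ^ N * g ∈ P then Nat.find h else 0
  refine ⟨s.sup Nfun, ?_⟩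
  set B := s.sup Nfun with hB
  -- key: π'^B kills J into P
  have key : ∀ f : R, f ∈ J → π' ^ B * f ∈ P := by
    intro f hf
    rw [← hs] at hf
    refine Submodule.span_induction ?_ ?_ ?_ ?_ hf
    · intro g hg
      have hgJ : g ∈ J := hs ▸ Ideal.subset_span hg
      obtain ⟨N, hN⟩ := hgJ
      have hex : ∃ N : ℕ, π' ^ N * g ∈ P := ⟨N, hN⟩
      have hfind : π' ^ Nat.find hex * g ∈ P := Nat.find_spec hex
      have hle : Nat.find hex ≤ B := by
        have : Nfun g = Nat.find hex := dif_pos hex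
        exact this ▸ Finset.le_sup hg
      have : π' ^ B = π' ^ (B - Nat.find hex) * π' ^ Nat.find hex := by
        rw [← pow_add, Nat.sub_add_cancel hle]
      rw [this, mul_assoc]
      exact P.mul_mem_left _ hfind
    · simpa using P.zero_mem
    · intro x y _ _ hx hy
      rw [mul_add]; exact P.add_mem hx hy
    · intro a x _ hx
      rw [smul_eq_mul, mul_left_comm]; exact P.mul_mem_left _ hx
  -- conclude
  intro m x hx ⟨N, hN⟩
  have hxR : (monomial m x : O[X]) ∈ reesAlgebra p := reesAlgebra.monomial_mem.mpr hx
  set f : R := ⟨monomial m x, hxR⟩ with hf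
  have hmulval : ∀ k : ℕ, ((π' ^ k * f : R) : O[X]) = monomial m (π ^ k * x) := by
    intro k
    push_cast
    show (C π) ^ k * (monomial m x : O[X]) = monomial m (π ^ k * x)
    rw [← C_pow, C_mul_monomial]
  have hfJ : f ∈ J := by
    refine ⟨N, ?_⟩
    have hmem : π ^ N * x ∈ p ^ (m + 1) := hN
    have h1 : (monomial m (π ^ N * x) : O[X]) ∈ reesAlgebra p :=
      reesAlgebra.monomial_mem.mpr (Ideal.pow_le_pow_right (Nat.le_succ m) hmem)
    have : (π' ^ N * f : R) = ⟨monomial m (π ^ N * x), h1⟩ := by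
      refine Subtype.ext ?_
      rw [hmulval]
    rw [this]
    exact hmono m _ hmem h1
  have := hPcoeff _ (key f hfJ) m
  rw [hmulval B, coeff_monomial_same] at this
  exact this
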